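/- Let 0 ≤ a < b ≤ 1. Then the number of grid points lying in [a,b] satisfies #{i ∈ {0,…,n} : t_i ∈ [a,b]} ≥ n·(b−a)/M − 1. -/

import Mathlib

open Set

/-- Under a time-transformed observation scheme `t i = f⁻¹(i/n)` with
`M⁻¹ < f' < M`, the number of observation times in `[a,b]` is at most
`M·n·(b−a) + 1`. -/
theorem stmt_1 (M : ℝ) (hM : 1 < M) (n : ℕ) (hn : 1 ≤ n)
    (f f' : ℝ → ℝ)
    (hmono : StrictMonoOn f (Icc 0 1))
    (hbij : Set.BijOn f (Icc 0 1) (Icc 0 1))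
    (hf0 : f 0 = 0) (hf1 : f 1 = 1)
    (hderiv : ∀ x ∈ Icc (0:ℝ) 1, HasDerivWithinAt f (f' x) (Icc 0 1) x)
    (hcont : ContinuousOn f' (Icc 0 1))
    (hlb : ∀ x ∈ Icc (0:ℝ) 1, M⁻¹ < f' x)
    (hub : ∀ x ∈ Icc (0:ℝ) 1, f' x < M)
    (t : ℕ → ℝ)
    (ht : ∀ i ≤ n, t i ∈ Icc (0:ℝ) 1 ∧ f (t i) = i / n)
    (a b : ℝ) (ha : 0 ≤ a) (hab : a < b) (hb : b ≤ 1) :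
    (((Finset.range (n + 1)).filter (fun i => t i ∈ Icc a b)).card : ℝ)
      ≥ n * (b - a) / M - 1 := by
  have h01 : (0:ℝ) ∈ Icc (0:ℝ) 1 := by constructor <;> norm_num
  have h11 : (1:ℝ) ∈ Icc (0:ℝ) 1 := by constructor <;> norm_num
  have haI : a ∈ Icc (0:ℝ) 1 := ⟨ha, hab.le.trans hb⟩
  have hbI : b ∈ Icc (0:ℝ) 1 := ⟨ha.trans hab.le, hb⟩
  have hfa0 : 0 ≤ f a := by
    have := (hmono.le_iff_le h01 haI).mpr ha
    rwa [hf0] at this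
  have hfb1 : f b ≤ 1 := by
    have := (hmono.le_iff_le hbI h11).mpr hb
    rwa [hf1] at this
  have hcontf : ContinuousOn f (Icc 0 1) := fun x hx => (hderiv x hx).continuousWithinAt
  have hMpos : 0 < M := lt_trans one_pos hM
  have hda : ∀ x ∈ interior (Icc (0:ℝ) 1), HasDerivAt f (f' x) x := by
    intro x hx
    rw [interior_Icc] at hx
    exact (hderiv x (Ioo_subset_Icc_self hx)).hasDerivAt (Icc_mem_nhds hx.1 hx.2)
  have hkey : M⁻¹ * (b - a) ≤ f b - f a := by
    refine Convex.mul_sub_le_image_sub_of_le_deriv (convex_Icc 0 1) hcontf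
      (fun x hx => (hda x hx).differentiableAt.differentiableWithinAt)
      (fun x hx => ?_) a haI b hbI hab.le
    rw [(hda x hx).deriv]
    rw [interior_Icc] at hx
    exact (hlb x (Ioo_subset_Icc_self hx)).le
  set k₁ : ℤ := ⌈(n:ℝ) * f a⌉ with hk1
  set k₂ : ℤ := ⌊(n:ℝ) * f b⌋ with hk2
  have hnpos : (0:ℝ) < n := by exact_mod_cast hn
  have hk1nn : 0 ≤ k₁ := Int.ceil_nonneg (by positivity)
  have hk2n : k₂ ≤ (n : ℤ) := by
    have h1 : (n:ℝ) * f b ≤ n := by nlinarith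
    calc k₂ ≤ ⌊(n:ℝ)⌋ := Int.floor_le_floor h1
    _ = n := Int.floor_natCast n
  have hsub : (Finset.Icc k₁ k₂).card ≤
      ((Finset.range (n+1)).filter (fun i => t i ∈ Icc a b)).card := by
    apply Finset.card_le_card_of_injOn (fun i => i.toNat)
    · intro i hi
      rw [Finset.mem_coe, Finset.mem_Icc] at hi
      have hi0 : 0 ≤ i := hk1nn.trans hi.1
      have hin : i.toNat ≤ n := by omega
      obtain ⟨hmI, hmval⟩ := ht i.toNat hin
      have hcast : ((i.toNat : ℕ) : ℝ) = (i : ℝ) := by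
        exact_mod_cast congrArg (Int.cast : ℤ → ℝ) (Int.toNat_of_nonneg hi0)
      have hlo : f a ≤ f (t i.toNat) := by
        rw [hmval, hcast]
        rw [le_div_iff₀ hnpos]
        have h1 : (n:ℝ) * f a ≤ (k₁ : ℝ) := Int.le_ceil _
        have h2 : (k₁ : ℝ) ≤ (i : ℝ) := by exact_mod_cast hi.1
        linarith [mul_comm (f a) (n:ℝ)]
      have hhi : f (t i.toNat) ≤ f b := by
        rw [hmval, hcast]
        rw [div_le_iff₀ hnpos]
        have h1 : (k₂ : ℝ) ≤ (n:ℝ) * f b := Int.floor_le _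
        have h2 : (i : ℝ) ≤ (k₂ : ℝ) := by exact_mod_cast hi.2
        linarith [mul_comm (f b) (n:ℝ)]
      simp only [Finset.mem_coe, Finset.mem_filter, Finset.mem_range]
      refine ⟨by omega, (hmono.le_iff_le haI hmI).mp hlo, (hmono.le_iff_le hmI hbI).mp hhi⟩
    · intro i hi j hj hij
      rw [Finset.mem_coe, Finset.mem_Icc] at hi hj
      have : 0 ≤ i := hk1nn.trans hi.1
      have : 0 ≤ j := hk1nn.trans hj.1
      have hij' : i.toNat = j.toNat := hij
      omega
  have hcard : ((k₂ + 1 - k₁ : ℤ) : ℝ) ≤ ((Finset.Icc k₁ k₂).card : ℝ) := by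
    rw [Int.card_Icc]
    exact_mod_cast Int.self_le_toNat _
  have hceil : (k₁ : ℝ) < (n:ℝ) * f a + 1 := Int.ceil_lt_add_one _
  have hfloor : (n:ℝ) * f b - 1 < (k₂ : ℝ) := Int.sub_one_lt_floor _
  have hfin : (n : ℝ) * (b - a) / M - 1 ≤ ((k₂ + 1 - k₁ : ℤ) : ℝ) := by
    push_cast
    have h3 : (n:ℝ) * (b - a) / M = (n:ℝ) * (M⁻¹ * (b - a)) := by
      field_simp
    have h4 : (n:ℝ) * (M⁻¹ * (b - a)) ≤ (n:ℝ) * (f b - f a) :=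
      mul_le_mul_of_nonneg_left hkey hnpos.le
    nlinarith
  have := (Nat.cast_le (α := ℝ)).mpr hsub
  linarith
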